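/- If ρ is a fixed point state of a quantum channel M, then the support of ρ is an invariant subspace for M; conversely, every nonzero invariant subspace S of M contains the support of some fixed point state of M. -/

import Mathlib

open Matrix
open scoped ComplexOrder

noncomputable section

abbrev Mat (d : ℕ) := Matrix (Fin d) (Fin d) ℂ

/-- `K` is a Kraus representation of the linear map `Φ`. -/
def IsKrausRep {d : ℕ} (Φ : Mat d →ₗ[ℂ] Mat d) {n : ℕ} (K : Fin n → Mat d) : Prop :=
  (∀ A, Φ A = ∑ i, K i * A * (K i)ᴴ) ∧ ∑ i, (K i)ᴴ * K i = 1

/-- A quantum channel: completely positive trace-preserving map, i.e. admitting a Kraus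
representation with the normalization condition. -/
def IsCPTP {d : ℕ} (Φ : Mat d →ₗ[ℂ] Mat d) : Prop :=
  ∃ (n : ℕ) (K : Fin n → Mat d), IsKrausRep Φ K

/-- A density matrix: positive semidefinite with unit trace. -/
def IsDensity {d : ℕ} (ρ : Mat d) : Prop := ρ.PosSemidef ∧ ρ.trace = 1

/-- Ergodicity: the channel has a unique fixed point density matrix. -/
def IsErgodic {d : ℕ} (Φ : Mat d →ₗ[ℂ] Mat d) : Prop :=
  ∃! ρ : Mat d, IsDensity ρ ∧ Φ ρ = ρ

/-- The support of an operator, viewed as a subspace of `ℂ^d`. -/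
def supp {d : ℕ} (ρ : Mat d) : Submodule ℂ (Fin d → ℂ) := LinearMap.range ρ.mulVecLin

/-- The trace norm `‖A‖₁ = Tr √(A†A)`. -/
def traceNorm {d : ℕ} (A : Mat d) : ℝ :=
  (((Matrix.posSemidef_conjTranspose_mul_self A).isHermitian.eigenvectorUnitary.1 *
    diagonal (((↑) : ℝ → ℂ) ∘ (√·) ∘ (Matrix.posSemidef_conjTranspose_mul_self A).isHermitian.eigenvalues) *
    (star (Matrix.posSemidef_conjTranspose_mul_self A).isHermitian.eigenvectorUnitary :
      Matrix (Fin d) (Fin d) ℂ)).trace).re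

/-- Mixing: iterates of the channel converge in trace norm to a unique state. -/
def IsMixing {d : ℕ} (Φ : Mat d →ₗ[ℂ] Mat d) : Prop :=
  ∃ ρs : Mat d, IsDensity ρs ∧ ∀ ρ : Mat d, IsDensity ρ →
    Filter.Tendsto (fun k : ℕ => traceNorm ((Φ ^ k) ρ - ρs)) Filter.atTop (nhds 0)

/-- A subspace `S` is invariant for a channel if every Kraus operator (of any Kraus
representation) maps `S` into itself. -/
def IsInvariantSubspace {d : ℕ} (Φ : Mat d →ₗ[ℂ] Mat d) (S : Submodule ℂ (Fin d → ℂ)) : Prop :=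
  ∀ (n : ℕ) (K : Fin n → Mat d), IsKrausRep Φ K → ∀ i, ∀ x ∈ S, (K i).mulVec x ∈ S

/-! ### Auxiliary lemmas -/

namespace FixedPointsAux

variable {d : ℕ}

lemma quad_conj (K ρ : Mat d) (z : Fin d → ℂ) :
    star z ⬝ᵥ (K * ρ * Kᴴ) *ᵥ z = star (Kᴴ *ᵥ z) ⬝ᵥ ρ *ᵥ (Kᴴ *ᵥ z) := by
  have h : star (Kᴴ *ᵥ z) = star z ᵥ* K := by
    rw [star_mulVec, conjTranspose_conjTranspose]
  rw [h, ← mulVec_mulVec, ← mulVec_mulVec, dotProduct_mulVec]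

/-- The quadratic-form functional `A ↦ z† A z` as a linear map in `A`. -/
def quadForm (z : Fin d → ℂ) : Mat d →ₗ[ℂ] ℂ where
  toFun A := star z ⬝ᵥ A *ᵥ z
  map_add' A B := by show star z ⬝ᵥ (A + B) *ᵥ z = _; rw [Matrix.add_mulVec, dotProduct_add]
  map_smul' c A := by
    show star z ⬝ᵥ (c • A) *ᵥ z = _
    rw [Matrix.smul_mulVec, dotProduct_smul, smul_eq_mul]; rfl

lemma quad_sum {n : ℕ} (M : Fin n → Mat d) (z : Fin d → ℂ) :
    star z ⬝ᵥ (∑ j, M j) *ᵥ z = ∑ j, star z ⬝ᵥ (M j) *ᵥ z :=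
  map_sum (quadForm z) M Finset.univ

lemma ker_inv {Φ : Mat d →ₗ[ℂ] Mat d} {ρ : Mat d} (hρ : ρ.PosSemidef)
    {n : ℕ} {K : Fin n → Mat d} (hK : IsKrausRep Φ K) (hfix : Φ ρ = ρ)
    {z : Fin d → ℂ} (hz : ρ *ᵥ z = 0) (i : Fin n) : ρ *ᵥ ((K i)ᴴ *ᵥ z) = 0 := by
  have h0 : ∑ j, star ((K j)ᴴ *ᵥ z) ⬝ᵥ ρ *ᵥ ((K j)ᴴ *ᵥ z) = 0 := by
    have hsum : (∑ j, K j * ρ * (K j)ᴴ) = ρ := by rw [← hK.1, hfix]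
    calc ∑ j, star ((K j)ᴴ *ᵥ z) ⬝ᵥ ρ *ᵥ ((K j)ᴴ *ᵥ z)
        = ∑ j, star z ⬝ᵥ (K j * ρ * (K j)ᴴ) *ᵥ z := by
          simp_rw [quad_conj]
      _ = star z ⬝ᵥ (∑ j, K j * ρ * (K j)ᴴ) *ᵥ z := (quad_sum _ z).symm
      _ = 0 := by rw [hsum, hz, dotProduct_zero]
  have hterm : ∀ j ∈ Finset.univ, star ((K j)ᴴ *ᵥ z) ⬝ᵥ ρ *ᵥ ((K j)ᴴ *ᵥ z) = 0 :=
    (Finset.sum_eq_zero_iff_of_nonneg (fun j _ => hρ.dotProduct_mulVec_nonneg _)).mp h0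
  exact (hρ.dotProduct_mulVec_zero_iff _).mp (hterm i (Finset.mem_univ i))

lemma range_forward {ρ : Mat d} (hρ : ρ.PosSemidef) {x : Fin d → ℂ}
    (hx : x ∈ LinearMap.range ρ.mulVecLin) {z : Fin d → ℂ} (hz : ρ *ᵥ z = 0) :
    star z ⬝ᵥ x = 0 := by
  obtain ⟨y, rfl⟩ := hx
  rw [mulVecLin_apply, dotProduct_mulVec]
  have h : star z ᵥ* ρ = star (ρ *ᵥ z) := by
    rw [star_mulVec, hρ.1]
  rw [h, hz]
  simp

lemma mem_range_psd {ρ : Mat d} (hρ : ρ.PosSemidef) (x : Fin d → ℂ) :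
    x ∈ LinearMap.range ρ.mulVecLin ↔ ∀ z, ρ *ᵥ z = 0 → star z ⬝ᵥ x = 0 := by
  constructor
  · exact fun hx z hz => range_forward hρ hx hz
  · intro hx
    set R := LinearMap.range ρ.mulVecLin with hR
    set Kk := LinearMap.ker ρ.mulVecLin with hKk
    have hdisj : R ⊓ Kk = ⊥ := by
      rw [Submodule.eq_bot_iff]
      rintro r ⟨hr, hk⟩
      have hk' : ρ *ᵥ r = 0 := hk
      have h : star r ⬝ᵥ r = 0 := range_forward hρ hr hk'
      exact (dotProduct_star_self_eq_zero).mp h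
    have hrank : Module.finrank ℂ R + Module.finrank ℂ Kk = d := by
      rw [hR, hKk]
      rw [LinearMap.finrank_range_add_finrank_ker]
      exact Module.finrank_fin_fun ℂ
    have hsup : R ⊔ Kk = ⊤ := by
      apply Submodule.eq_top_of_finrank_eq
      have h := Submodule.finrank_sup_add_finrank_inf_eq R Kk
      rw [hdisj] at h
      simp only [finrank_bot, add_zero] at h
      rw [h, hrank, Module.finrank_fin_fun]
    obtain ⟨r, hr, k, hk, hrk⟩ := Submodule.mem_sup.mp (hsup ▸ Submodule.mem_top (x := x))
    have hkk : ρ *ᵥ k = 0 := hk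
    have h1 : star k ⬝ᵥ x = 0 := hx k hkk
    have h2 : star k ⬝ᵥ r = 0 := range_forward hρ hr hkk
    have h3 : star k ⬝ᵥ k = 0 := by
      have h : star k ⬝ᵥ (r + k) = 0 := by rw [hrk]; exact h1
      rwa [dotProduct_add, h2, zero_add] at h
    have hk0 : k = 0 := dotProduct_star_self_eq_zero.mp h3
    rw [← hrk, hk0, add_zero]
    exact hr

/-! ### Entry bounds for density matrices -/

lemma diag_nonneg {ρ : Mat d} (hρ : ρ.PosSemidef) (i : Fin d) : 0 ≤ ρ i i := by
  have h := hρ.dotProduct_mulVec_nonneg (Pi.single i 1)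
  simpa [← Pi.single_star, single_dotProduct] using h

lemma diag_re_le_one {ρ : Mat d} (hρ : ρ.PosSemidef) (ht : ρ.trace = 1) (i : Fin d) :
    (ρ i i).re ≤ 1 := by
  have h1 : (∑ k, ρ k k).re = 1 := by
    have h : ∑ k, ρ k k = ρ.trace := rfl
    rw [h, ht]; rfl
  rw [Complex.re_sum] at h1
  calc (ρ i i).re ≤ ∑ k, (ρ k k).re :=
        Finset.single_le_sum (fun k _ => (Complex.le_def.mp (diag_nonneg hρ k)).1)
          (Finset.mem_univ i)
    _ = 1 := h1

lemma entry_norm_le_one {ρ : Mat d} (hρ : ρ.PosSemidef) (ht : ρ.trace = 1) (i j : Fin d) :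
    ‖ρ i j‖ ≤ 1 := by
  have hq : star (Pi.single i (-ρ i j) + Pi.single j 1) ⬝ᵥ
      ρ *ᵥ (Pi.single i (-ρ i j) + Pi.single j 1)
      = (Complex.normSq (ρ i j) : ℂ) * ρ i i - 2 * Complex.normSq (ρ i j) + ρ j j := by
    have hji : ρ j i = star (ρ i j) := by rw [← Matrix.conjTranspose_apply, hρ.1]
    simp [star_add, ← Pi.single_star, Matrix.mulVec_add, Matrix.mulVec_single, dotProduct_add,
      single_dotProduct, hji, Complex.normSq_eq_conj_mul_self]
    ring
  have h0 : 0 ≤ ((Complex.normSq (ρ i j) : ℂ) * ρ i i - 2 * Complex.normSq (ρ i j) + ρ j j) := by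
    rw [← hq]; exact hρ.dotProduct_mulVec_nonneg _
  have h0re : 0 ≤ Complex.normSq (ρ i j) * (ρ i i).re - 2 * Complex.normSq (ρ i j)
      + (ρ j j).re := by
    have h := (Complex.le_def.mp h0).1
    simpa [Complex.add_re, Complex.sub_re, Complex.re_ofReal_mul] using h
  have hii := diag_re_le_one hρ ht i
  have hjj := diag_re_le_one hρ ht j
  have hns : Complex.normSq (ρ i j) ≤ 1 := by nlinarith [Complex.normSq_nonneg (ρ i j)]
  have hsq : ‖ρ i j‖ ^ 2 = Complex.normSq (ρ i j) := by
    rw [← Complex.sq_norm]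
  nlinarith [norm_nonneg (ρ i j)]

/-! ### Properties of channels -/

lemma trace_preserved {Φ : Mat d →ₗ[ℂ] Mat d} {n : ℕ} {K : Fin n → Mat d}
    (hK : IsKrausRep Φ K) (A : Mat d) : (Φ A).trace = A.trace := by
  rw [hK.1, Matrix.trace_sum]
  calc ∑ i, (K i * A * (K i)ᴴ).trace = ∑ i, ((K i)ᴴ * K i * A).trace := by
        refine Finset.sum_congr rfl fun i _ => ?_
        rw [Matrix.trace_mul_cycle, Matrix.mul_assoc]
    _ = ((∑ i, (K i)ᴴ * K i) * A).trace := by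
        rw [Finset.sum_mul, Matrix.trace_sum]
    _ = A.trace := by rw [hK.2, Matrix.one_mul]

lemma psd_preserved {Φ : Mat d →ₗ[ℂ] Mat d} {n : ℕ} {K : Fin n → Mat d}
    (hK : IsKrausRep Φ K) {A : Mat d} (hA : A.PosSemidef) : (Φ A).PosSemidef := by
  rw [hK.1]
  classical
  exact Finset.sum_induction _ _ (fun a b ha hb => ha.add hb) Matrix.PosSemidef.zero
    (fun i _ => hA.mul_mul_conjTranspose_same (K i))

lemma sum_mulVec' {n : ℕ} (M : Fin n → Mat d) (y : Fin d → ℂ) :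
    (∑ i, M i) *ᵥ y = ∑ i, M i *ᵥ y :=
  map_sum (Matrix.mulVec.addMonoidHomLeft y) M Finset.univ

lemma sum_mulVec'' {ι : Type*} (s : Finset ι) (M : ι → Mat d) (y : Fin d → ℂ) :
    (∑ i ∈ s, M i) *ᵥ y = ∑ i ∈ s, M i *ᵥ y :=
  map_sum (Matrix.mulVec.addMonoidHomLeft y) M s

lemma lim_nonneg {c : ℕ → ℂ} {L : ℂ} (h : Filter.Tendsto c Filter.atTop (nhds L))
    (hc : ∀ n, 0 ≤ c n) : 0 ≤ L := by
  have hre : Filter.Tendsto (fun n => (c n).re) Filter.atTop (nhds L.re) :=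
    (Complex.continuous_re.tendsto L).comp h
  have him : Filter.Tendsto (fun n => (c n).im) Filter.atTop (nhds L.im) :=
    (Complex.continuous_im.tendsto L).comp h
  have h1 : 0 ≤ L.re :=
    ge_of_tendsto' hre (fun n => (Complex.le_def.mp (hc n)).1)
  have heq : (fun n => (c n).im) = fun _ => (0 : ℝ) :=
    funext fun n => ((Complex.le_def.mp (hc n)).2).symm
  rw [heq] at him
  have h2 : L.im = 0 := (tendsto_nhds_unique him tendsto_const_nhds)
  exact Complex.le_def.mpr ⟨by simpa using h1, by simp [h2]⟩

/-- The entry functional as a linear map. -/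
def entryLM (i j : Fin d) : Mat d →ₗ[ℂ] ℂ where
  toFun M := M i j
  map_add' _ _ := rfl
  map_smul' _ _ := rfl

/-- `M ↦ M *ᵥ y` as a linear map. -/
def mulVecLM (y : Fin d → ℂ) : Mat d →ₗ[ℂ] (Fin d → ℂ) where
  toFun M := M *ᵥ y
  map_add' A B := Matrix.add_mulVec A B y
  map_smul' c A := by simp [Matrix.smul_mulVec]

lemma supp_preserved {Φ : Mat d →ₗ[ℂ] Mat d} {n : ℕ} {K : Fin n → Mat d}
    (hK : IsKrausRep Φ K) {S : Submodule ℂ (Fin d → ℂ)}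
    (hinv : ∀ i, ∀ x ∈ S, (K i).mulVec x ∈ S)
    {A : Mat d} (hA : ∀ y, A *ᵥ y ∈ S) (y : Fin d → ℂ) : (Φ A) *ᵥ y ∈ S := by
  rw [hK.1, sum_mulVec']
  refine Submodule.sum_mem S fun i _ => ?_
  have h : (K i * A * (K i)ᴴ) *ᵥ y = (K i) *ᵥ (A *ᵥ ((K i)ᴴ *ᵥ y)) := by
    rw [← Matrix.mulVec_mulVec, ← Matrix.mulVec_mulVec]
  rw [h]
  exact hinv i _ (hA _)

lemma psd_smul' {A : Mat d} (hA : A.PosSemidef) {c : ℂ} (hc : 0 ≤ c) : (c • A).PosSemidef := by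
  have him : c.im = 0 := ((Complex.le_def).mp hc).2.symm
  refine Matrix.PosSemidef.of_dotProduct_mulVec_nonneg ?_ ?_
  · rw [Matrix.IsHermitian, conjTranspose_smul, hA.1]
    congr 1
    exact Complex.conj_eq_iff_im.mpr him
  · intro x
    rw [Matrix.smul_mulVec, dotProduct_smul, smul_eq_mul]
    exact mul_nonneg hc (hA.dotProduct_mulVec_nonneg x)

/-! ### The seed state supported in `S` -/

lemma vmv_mulVec (v : Fin d → ℂ) (x : Fin d → ℂ) :
    (vecMulVec v (star v)) *ᵥ x = (star v ⬝ᵥ x) • v := by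
  ext i
  simp [Matrix.mulVec, Matrix.vecMulVec_apply, dotProduct, Finset.sum_mul, Finset.mul_sum,
    mul_comm, mul_assoc, mul_left_comm]

lemma vmv_psd (v : Fin d → ℂ) : (vecMulVec v (star v)).PosSemidef := by
  refine Matrix.PosSemidef.of_dotProduct_mulVec_nonneg ?_ ?_
  · ext i j
    simp [Matrix.conjTranspose_apply, Matrix.vecMulVec_apply, mul_comm]
  · intro x
    rw [vmv_mulVec, dotProduct_smul]
    have h : star x ⬝ᵥ v = star (star v ⬝ᵥ x) := by
      simp [dotProduct, Finset.sum_comm, mul_comm]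
    rw [smul_eq_mul, h]
    exact mul_star_self_nonneg _

lemma star_dot_self_nonneg' (v : Fin d → ℂ) : 0 ≤ star v ⬝ᵥ v := by
  simpa using dotProduct_star_self_nonneg v

lemma vmv_trace (v : Fin d → ℂ) : (vecMulVec v (star v)).trace = star v ⬝ᵥ v := by
  simp [Matrix.trace, Matrix.diag, Matrix.vecMulVec_apply, dotProduct, mul_comm]

def sigma0 (v : Fin d → ℂ) : Mat d := (star v ⬝ᵥ v)⁻¹ • vecMulVec v (star v)

lemma sigma0_posSemidef (v : Fin d → ℂ) : (sigma0 v).PosSemidef := by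
  refine psd_smul' (vmv_psd v) ?_
  obtain ⟨r, hr, hrr⟩ : ∃ r : ℝ, 0 ≤ r ∧ star v ⬝ᵥ v = (r : ℂ) := by
    have h := star_dot_self_nonneg' v
    refine ⟨(star v ⬝ᵥ v).re, (Complex.le_def.mp h).1, ?_⟩
    apply Complex.ext
    · simp
    · simp [((Complex.le_def.mp h).2).symm]
  rw [hrr, ← Complex.ofReal_inv]
  exact Complex.zero_le_real.mpr (inv_nonneg.mpr hr)

lemma sigma0_trace {v : Fin d → ℂ} (hv : v ≠ 0) : (sigma0 v).trace = 1 := by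
  rw [sigma0, Matrix.trace_smul, vmv_trace, smul_eq_mul, inv_mul_cancel₀]
  intro h
  exact hv (dotProduct_star_self_eq_zero.mp h)

lemma sigma0_mulVec_mem {v : Fin d → ℂ} {S : Submodule ℂ (Fin d → ℂ)} (hvS : v ∈ S)
    (y : Fin d → ℂ) : (sigma0 v) *ᵥ y ∈ S := by
  rw [sigma0, Matrix.smul_mulVec, vmv_mulVec]
  exact S.smul_mem _ (S.smul_mem _ hvS)

end FixedPointsAux

/-- The support of a fixed point state is an invariant subspace; conversely every nonzero
invariant subspace contains the support of some fixed point state. -/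
theorem fixed_points_and_invariant_subspaces {d : ℕ} (Φ : Mat d →ₗ[ℂ] Mat d) (hΦ : IsCPTP Φ) :
    (∀ ρ : Mat d, IsDensity ρ → Φ ρ = ρ → IsInvariantSubspace Φ (supp ρ)) ∧
    (∀ S : Submodule ℂ (Fin d → ℂ), IsInvariantSubspace Φ S → S ≠ ⊥ →
      ∃ ρ : Mat d, IsDensity ρ ∧ Φ ρ = ρ ∧ supp ρ ≤ S) := by
  open FixedPointsAux in
  constructor
  · -- the support of a fixed point is invariant
    intro ρ hρd hfix n K hK i x hx
    rw [supp, FixedPointsAux.mem_range_psd hρd.1] at hx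
    rw [supp, FixedPointsAux.mem_range_psd hρd.1]
    intro z hz
    have h1 : ρ *ᵥ ((K i)ᴴ *ᵥ z) = 0 := FixedPointsAux.ker_inv hρd.1 hK hfix hz i
    have h2 := hx _ h1
    calc star z ⬝ᵥ (K i).mulVec x = (star z ᵥ* K i) ⬝ᵥ x := dotProduct_mulVec _ _ _
      _ = star ((K i)ᴴ *ᵥ z) ⬝ᵥ x := by
          rw [star_mulVec, conjTranspose_conjTranspose]
      _ = 0 := h2
  · -- every nonzero invariant subspace contains the support of a fixed point
    intro S hS hSne
    obtain ⟨n, K, hK⟩ := hΦ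
    have hinv : ∀ i, ∀ x ∈ S, (K i).mulVec x ∈ S := hS n K hK
    obtain ⟨v, hvS, hv0⟩ := Submodule.exists_mem_ne_zero_of_ne_bot hSne
    set σ : Mat d := FixedPointsAux.sigma0 v with hσ
    -- the iterates of the seed state
    have hiter : ∀ k : ℕ, ((Φ ^ k) σ).PosSemidef ∧ ((Φ ^ k) σ).trace = 1 ∧
        ∀ y, ((Φ ^ k) σ) *ᵥ y ∈ S := by
      intro k
      induction k with
      | zero =>
        simpa using ⟨FixedPointsAux.sigma0_posSemidef v, FixedPointsAux.sigma0_trace hv0,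
          FixedPointsAux.sigma0_mulVec_mem hvS⟩
      | succ k ih =>
        have hstep : (Φ ^ (k + 1)) σ = Φ ((Φ ^ k) σ) := by rw [pow_succ']; rfl
        rw [hstep]
        exact ⟨FixedPointsAux.psd_preserved hK ih.1,
          (FixedPointsAux.trace_preserved hK _).trans ih.2.1,
          FixedPointsAux.supp_preserved hK hinv ih.2.2⟩
    letI : NormedAddCommGroup (Mat d) := Matrix.normedAddCommGroup
    letI : NormedSpace ℂ (Mat d) := Matrix.normedSpace
    haveI : ProperSpace (Mat d) := FiniteDimensional.proper ℂ (Mat d)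
    -- the Cesàro averages
    set A : ℕ → Mat d := fun N => (((N + 1 : ℕ) : ℂ))⁻¹ • ∑ k ∈ Finset.range (N + 1), (Φ ^ k) σ
      with hAdef
    have hcoef : ∀ N : ℕ, (0 : ℂ) ≤ (((N + 1 : ℕ) : ℂ))⁻¹ := by
      intro N
      rw [show (((N + 1 : ℕ) : ℂ)) = (((N + 1 : ℕ) : ℝ) : ℂ) by push_cast; ring,
        ← Complex.ofReal_inv]
      exact Complex.zero_le_real.mpr (by positivity)
    have hAN : ∀ N, (A N).PosSemidef ∧ (A N).trace = 1 ∧ ∀ y, (A N) *ᵥ y ∈ S := by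
      intro N
      refine ⟨?_, ?_, ?_⟩
      · refine FixedPointsAux.psd_smul' ?_ (hcoef N)
        exact Finset.sum_induction _ _ (fun a b ha hb => ha.add hb) Matrix.PosSemidef.zero
          (fun k _ => (hiter k).1)
      · rw [hAdef]
        simp only [Matrix.trace_smul, Matrix.trace_sum]
        rw [Finset.sum_congr rfl (fun k _ => (hiter k).2.1), Finset.sum_const,
          Finset.card_range, nsmul_eq_mul, mul_one, smul_eq_mul, inv_mul_cancel₀]
        exact Nat.cast_ne_zero.mpr (Nat.succ_ne_zero N)
      · intro y
        rw [hAdef]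
        simp only [Matrix.smul_mulVec]
        rw [FixedPointsAux.sum_mulVec'']
        exact S.smul_mem _ (Submodule.sum_mem S fun k _ => (hiter k).2.2 y)
    have hnormA : ∀ N, ‖A N‖ ≤ 1 := fun N =>
      (Matrix.norm_le_iff zero_le_one).mpr fun i j =>
        FixedPointsAux.entry_norm_le_one (hAN N).1 (hAN N).2.1 i j
    have hnormIter : ∀ k, ‖(Φ ^ k) σ‖ ≤ 1 := fun k =>
      (Matrix.norm_le_iff zero_le_one).mpr fun i j =>
        FixedPointsAux.entry_norm_le_one (hiter k).1 (hiter k).2.1 i j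
    -- extract a convergent subsequence
    obtain ⟨ρs, _, φ, hφmono, hconv⟩ :=
      (isCompact_closedBall (0 : Mat d) 1).tendsto_subseq
        (fun N => mem_closedBall_zero_iff.mpr (hnormA N))
    -- the key algebraic identity
    have hkey : ∀ N, Φ (A N) = A N + (((N + 1 : ℕ) : ℂ))⁻¹ • ((Φ ^ (N + 1)) σ - σ) := by
      intro N
      have h1 : ∀ k : ℕ, Φ ((Φ ^ k) σ) = (Φ ^ (k + 1)) σ := by
        intro k; rw [pow_succ']; rfl
      have e1 := Finset.sum_range_succ' (fun k => (Φ ^ k) σ) (N + 1)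
      have e2 := Finset.sum_range_succ (fun k => (Φ ^ k) σ) (N + 1)
      have h0 : (Φ ^ 0) σ = σ := by simp
      have e3 : ∑ k ∈ Finset.range (N + 1), (Φ ^ (k + 1)) σ
          = ∑ k ∈ Finset.range (N + 1), (Φ ^ k) σ + ((Φ ^ (N + 1)) σ - σ) := by
        have := e1.symm.trans e2
        rw [h0] at this
        rw [← add_sub_assoc, ← this]
        abel
      rw [hAdef]
      rw [_root_.map_smul, map_sum]
      simp_rw [h1]
      rw [e3, smul_add]
    -- the error term tends to zero
    have hE : Filter.Tendsto (fun N => (((N + 1 : ℕ) : ℂ))⁻¹ • ((Φ ^ (N + 1)) σ - σ))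
        Filter.atTop (nhds 0) := by
      apply squeeze_zero_norm (a := fun N : ℕ => 2 * (1 / ((N : ℝ) + 1)))
      · intro N
        rw [norm_smul, norm_inv, Complex.norm_natCast]
        have hb : ‖(Φ ^ (N + 1)) σ - σ‖ ≤ 2 := by
          calc ‖(Φ ^ (N + 1)) σ - σ‖ ≤ ‖(Φ ^ (N + 1)) σ‖ + ‖σ‖ := norm_sub_le _ _
            _ ≤ 1 + 1 := add_le_add (hnormIter (N + 1)) (by simpa using hnormIter 0)
            _ = 2 := by norm_num
        calc (((N + 1 : ℕ) : ℝ))⁻¹ * ‖(Φ ^ (N + 1)) σ - σ‖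
            ≤ (((N + 1 : ℕ) : ℝ))⁻¹ * 2 := by
              refine mul_le_mul_of_nonneg_left hb (by positivity)
          _ = 2 * (1 / ((N : ℝ) + 1)) := by push_cast; ring
      · simpa using tendsto_one_div_add_atTop_nhds_zero_nat.const_mul (2 : ℝ)
    have hcont : Continuous Φ := Φ.continuous_of_finiteDimensional
    -- the limit is a fixed point
    have hfix : Φ ρs = ρs := by
      have l1 : Filter.Tendsto (fun j => Φ (A (φ j))) Filter.atTop (nhds (Φ ρs)) :=
        (hcont.tendsto ρs).comp hconv
      have l2 : Filter.Tendsto (fun j => Φ (A (φ j))) Filter.atTop (nhds (ρs + 0)) := by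
        have hEφ := hE.comp (hφmono.tendsto_atTop)
        have := hconv.add hEφ
        exact (Filter.Tendsto.congr (fun j => (hkey (φ j)).symm) this)
      have := tendsto_nhds_unique l1 l2
      rwa [add_zero] at this
    -- entrywise convergence
    have hentry : ∀ i j, Filter.Tendsto (fun jj => A (φ jj) i j) Filter.atTop (nhds (ρs i j)) :=
      fun i j => ((FixedPointsAux.entryLM i j).continuous_of_finiteDimensional.tendsto ρs).comp
        hconv
    -- the limit is Hermitian
    have hherm : ρs.IsHermitian := by
      refine Matrix.IsHermitian.ext fun i j => ?_
      have t1 : Filter.Tendsto (fun jj => star (A (φ jj) j i)) Filter.atTop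
          (nhds (star (ρs j i))) := (continuous_star.tendsto _).comp (hentry j i)
      have heq : (fun jj => star (A (φ jj) j i)) = fun jj => A (φ jj) i j :=
        funext fun jj => (hAN (φ jj)).1.1.apply i j
      rw [heq] at t1
      exact tendsto_nhds_unique t1 (hentry i j)
    -- the limit is positive semidefinite
    have hpsd : ρs.PosSemidef := by
      refine Matrix.PosSemidef.of_dotProduct_mulVec_nonneg hherm fun x => ?_
      have t1 : Filter.Tendsto (fun jj => star x ⬝ᵥ (A (φ jj)) *ᵥ x) Filter.atTop
          (nhds (star x ⬝ᵥ ρs *ᵥ x)) :=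
        ((FixedPointsAux.quadForm x).continuous_of_finiteDimensional.tendsto ρs).comp hconv
      exact FixedPointsAux.lim_nonneg t1 fun jj => (hAN (φ jj)).1.dotProduct_mulVec_nonneg x
    -- the limit has trace one
    have htr : ρs.trace = 1 := by
      have t1 : Filter.Tendsto (fun jj => (A (φ jj)).trace) Filter.atTop (nhds ρs.trace) :=
        ((Matrix.traceLinearMap (Fin d) ℂ ℂ).continuous_of_finiteDimensional.tendsto ρs).comp
          hconv
      have heq : (fun jj => (A (φ jj)).trace) = fun _ => (1 : ℂ) :=
        funext fun jj => (hAN (φ jj)).2.1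
      rw [heq] at t1
      exact (tendsto_nhds_unique t1 tendsto_const_nhds)
    -- the limit is supported in S
    have hsupp : ∀ y, ρs *ᵥ y ∈ S := by
      intro y
      have t1 : Filter.Tendsto (fun jj => (A (φ jj)) *ᵥ y) Filter.atTop (nhds (ρs *ᵥ y)) :=
        ((FixedPointsAux.mulVecLM y).continuous_of_finiteDimensional.tendsto ρs).comp hconv
      exact (S.closed_of_finiteDimensional).mem_of_tendsto t1
        (Filter.Eventually.of_forall fun jj => (hAN (φ jj)).2.2 y)
    refine ⟨ρs, ⟨hpsd, htr⟩, hfix, ?_⟩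
    rintro x ⟨y, rfl⟩
    exact hsupp y
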